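/- For all p, q ≥ 1, the double star S_{p,q} satisfies IC(S_{p,q}) = 4. -/

import Mathlib

namespace ICNL

variable {V : Type*}

/-- `S` is a dominating set of `G`. -/
def Dominating (G : SimpleGraph V) (S : Set V) : Prop :=
  ∀ v : V, v ∈ S ∨ ∃ u ∈ S, G.Adj u v

/-- `S` is an independent set of `G`. -/
def IndepSet (G : SimpleGraph V) (S : Set V) : Prop :=
  ∀ ⦃u : V⦄, u ∈ S → ∀ ⦃v : V⦄, v ∈ S → ¬ G.Adj u v

/-- `S` is an independent dominating set of `G`. -/
def IndepDom (G : SimpleGraph V) (S : Set V) : Prop :=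
  IndepSet G S ∧ Dominating G S

/-- `A` and `B` form an independent coalition in `G`. -/
def ICCoalition (G : SimpleGraph V) (A B : Set V) : Prop :=
  Disjoint A B ∧ IndepSet G A ∧ IndepSet G B ∧
    ¬ IndepDom G A ∧ ¬ IndepDom G B ∧ IndepDom G (A ∪ B)

/-- `π` is a partition of the vertex set into nonempty classes. -/
def IsPartition (π : Finset (Finset V)) : Prop :=
  (∀ A ∈ π, A.Nonempty) ∧ ∀ v : V, ∃! A : Finset V, A ∈ π ∧ v ∈ A

/-- `π` is an independent coalition partition of `G`. -/
def IsICPartition (G : SimpleGraph V) (π : Finset (Finset V)) : Prop :=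
  IsPartition π ∧
    ∀ A ∈ π, (∃ v : V, (A : Set V) = {v} ∧ Dominating G (A : Set V)) ∨
      (¬ IndepDom G (A : Set V) ∧
        ∃ B ∈ π, B ≠ A ∧ ICCoalition G (A : Set V) (B : Set V))

/-- The independent coalition number: the maximum number of classes of an
ic-partition of `G`. -/
noncomputable def IC (G : SimpleGraph V) : ℕ :=
  sSup {k | ∃ π : Finset (Finset V), IsICPartition G π ∧ π.card = k}


/-- The double star `S_{p,q}`: the two support vertices `Sum.inr (Sum.inr 0)` and
`Sum.inr (Sum.inr 1)` are adjacent, the `p` leaves `Sum.inl i` are adjacent to the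
first support vertex, and the `q` leaves `Sum.inr (Sum.inl j)` are adjacent to the
second support vertex. -/
def doubleStar (p q : ℕ) : SimpleGraph (Fin p ⊕ Fin q ⊕ Fin 2) :=
  SimpleGraph.fromRel (fun u v =>
    (u = Sum.inr (Sum.inr 0) ∧ v = Sum.inr (Sum.inr 1)) ∨
    ((∃ i : Fin p, u = Sum.inl i) ∧ v = Sum.inr (Sum.inr 0)) ∨
    ((∃ j : Fin q, u = Sum.inr (Sum.inl j)) ∧ v = Sum.inr (Sum.inr 1)))


/-! ### Auxiliary material for `stmt_7` -/

abbrev DSV (p q : ℕ) := Fin p ⊕ Fin q ⊕ Fin 2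

abbrev cc0 (p q : ℕ) : DSV p q := Sum.inr (Sum.inr 0)
abbrev cc1 (p q : ℕ) : DSV p q := Sum.inr (Sum.inr 1)
abbrev sL (p q : ℕ) : Set (DSV p q) := {v | ∃ i, v = Sum.inl i}
abbrev sR (p q : ℕ) : Set (DSV p q) := {v | ∃ j, v = Sum.inr (Sum.inl j)}
abbrev FL (p q : ℕ) : Finset (DSV p q) := Finset.univ.image Sum.inl
abbrev FR (p q : ℕ) : Finset (DSV p q) := Finset.univ.image (fun j => Sum.inr (Sum.inl j))

lemma ds_adj (p q : ℕ) (u v : DSV p q) :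
    (doubleStar p q).Adj u v ↔
      (u = Sum.inr (Sum.inr 0) ∧ v = Sum.inr (Sum.inr 1)) ∨
      (u = Sum.inr (Sum.inr 1) ∧ v = Sum.inr (Sum.inr 0)) ∨
      ((∃ i, u = Sum.inl i) ∧ v = Sum.inr (Sum.inr 0)) ∨
      ((∃ i, v = Sum.inl i) ∧ u = Sum.inr (Sum.inr 0)) ∨
      ((∃ j, u = Sum.inr (Sum.inl j)) ∧ v = Sum.inr (Sum.inr 1)) ∨
      ((∃ j, v = Sum.inr (Sum.inl j)) ∧ u = Sum.inr (Sum.inr 1)) := by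
  rw [doubleStar, SimpleGraph.fromRel_adj]
  constructor
  · rintro ⟨hne, h | h⟩ <;> tauto
  · intro h
    rcases h with ⟨h1,h2⟩|⟨h1,h2⟩|⟨⟨i,hi⟩,h2⟩|⟨⟨i,hi⟩,h2⟩|⟨⟨j,hj⟩,h2⟩|⟨⟨j,hj⟩,h2⟩ <;>
      subst_vars <;> exact ⟨by simp, by tauto⟩

section Aux
variable {p q : ℕ}

lemma ids_cases {S : Set (DSV p q)} (h : IndepDom (doubleStar p q) S) :
    S = insert (cc0 p q) (sR p q) ∨ S = insert (cc1 p q) (sL p q) ∨ S = sL p q ∪ sR p q := by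
  obtain ⟨hind, hdom⟩ := h
  by_cases h0 : cc0 p q ∈ S
  · left
    have hc1 : cc1 p q ∉ S := fun h1 => hind h0 h1 (by rw [ds_adj]; tauto)
    have hL : ∀ i, Sum.inl i ∉ S := fun i hi => hind h0 hi (by rw [ds_adj]; tauto)
    ext v
    constructor
    · intro hv
      rcases v with i | j | k
      · exact absurd hv (hL i)
      · exact Or.inr ⟨j, rfl⟩
      · left
        have : k = 0 ∨ k = 1 := by omega
        rcases this with rfl | rfl
        · rfl
        · exact absurd hv hc1
    · rintro (rfl | ⟨j, rfl⟩)
      · exact h0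
      · rcases hdom (Sum.inr (Sum.inl j)) with h | ⟨u, hu, hadj⟩
        · exact h
        · rw [ds_adj] at hadj
          rcases hadj with ⟨h1,h2⟩|⟨h1,h2⟩|⟨⟨i,hi⟩,h2⟩|⟨⟨i,hi⟩,h2⟩|⟨⟨j',hj⟩,h2⟩|⟨⟨j',hj⟩,h2⟩ <;>
            simp_all [cc0, cc1]
  · by_cases h1 : cc1 p q ∈ S
    · right; left
      have hR : ∀ j, Sum.inr (Sum.inl j) ∉ S := fun j hj => hind h1 hj (by rw [ds_adj]; tauto)
      ext v
      constructor
      · intro hv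
        rcases v with i | j | k
        · exact Or.inr ⟨i, rfl⟩
        · exact absurd hv (hR j)
        · left
          have : k = 0 ∨ k = 1 := by omega
          rcases this with rfl | rfl
          · exact absurd hv h0
          · rfl
      · rintro (rfl | ⟨i, rfl⟩)
        · exact h1
        · rcases hdom (Sum.inl i) with h | ⟨u, hu, hadj⟩
          · exact h
          · rw [ds_adj] at hadj
            rcases hadj with ⟨ha,hb⟩|⟨ha,hb⟩|⟨⟨i',hi⟩,hb⟩|⟨⟨i',hi⟩,hb⟩|⟨⟨j',hj⟩,hb⟩|⟨⟨j',hj⟩,hb⟩ <;>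
              simp_all [cc0, cc1]
    · right; right
      ext v
      constructor
      · intro hv
        rcases v with i | j | k
        · exact Or.inl ⟨i, rfl⟩
        · exact Or.inr ⟨j, rfl⟩
        · exfalso
          have : k = 0 ∨ k = 1 := by omega
          rcases this with rfl | rfl
          · exact h0 hv
          · exact h1 hv
      · rintro (⟨i, rfl⟩ | ⟨j, rfl⟩)
        · rcases hdom (Sum.inl i) with h | ⟨u, hu, hadj⟩
          · exact h
          · rw [ds_adj] at hadj
            rcases hadj with ⟨ha,hb⟩|⟨ha,hb⟩|⟨⟨i',hi⟩,hb⟩|⟨⟨i',hi⟩,hb⟩|⟨⟨j',hj⟩,hb⟩|⟨⟨j',hj⟩,hb⟩ <;>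
              simp_all [cc0, cc1]
        · rcases hdom (Sum.inr (Sum.inl j)) with h | ⟨u, hu, hadj⟩
          · exact h
          · rw [ds_adj] at hadj
            rcases hadj with ⟨ha,hb⟩|⟨ha,hb⟩|⟨⟨i',hi⟩,hb⟩|⟨⟨i',hi⟩,hb⟩|⟨⟨j',hj⟩,hb⟩|⟨⟨j',hj⟩,hb⟩ <;>
              simp_all [cc0, cc1]

/-- The three independent dominating sets. -/
lemma indepDom_S0 : IndepDom (doubleStar p q) (insert (cc0 p q) (sR p q)) := by
  constructor
  · intro u hu v hv hadj
    rw [ds_adj] at hadj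
    rcases hu with rfl | ⟨j, rfl⟩ <;> rcases hv with rfl | ⟨j', rfl⟩ <;>
      simp_all [Fin.ext_iff]
  · intro v
    rcases v with i | j | k
    · exact Or.inr ⟨cc0 p q, Set.mem_insert _ _, by rw [ds_adj]; exact Or.inr (Or.inr (Or.inr (Or.inl ⟨⟨i, rfl⟩, rfl⟩)))⟩
    · exact Or.inl (Set.mem_insert_iff.mpr (Or.inr ⟨j, rfl⟩))
    · have : k = 0 ∨ k = 1 := by omega
      rcases this with rfl | rfl
      · exact Or.inl (Set.mem_insert _ _)
      · exact Or.inr ⟨cc0 p q, Set.mem_insert _ _, by rw [ds_adj]; exact Or.inl ⟨rfl, rfl⟩⟩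

lemma indepDom_S1 : IndepDom (doubleStar p q) (insert (cc1 p q) (sL p q)) := by
  constructor
  · intro u hu v hv hadj
    rw [ds_adj] at hadj
    rcases hu with rfl | ⟨i, rfl⟩ <;> rcases hv with rfl | ⟨i', rfl⟩ <;>
      simp_all [Fin.ext_iff]
  · intro v
    rcases v with i | j | k
    · exact Or.inl (Set.mem_insert_iff.mpr (Or.inr ⟨i, rfl⟩))
    · exact Or.inr ⟨cc1 p q, Set.mem_insert _ _, by rw [ds_adj]; exact Or.inr (Or.inr (Or.inr (Or.inr (Or.inr ⟨⟨j, rfl⟩, rfl⟩))))⟩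
    · have : k = 0 ∨ k = 1 := by omega
      rcases this with rfl | rfl
      · exact Or.inr ⟨cc1 p q, Set.mem_insert _ _, by rw [ds_adj]; exact Or.inr (Or.inl ⟨rfl, rfl⟩)⟩
      · exact Or.inl (Set.mem_insert _ _)

lemma not_dom_singleton (hp : 1 ≤ p) (hq : 1 ≤ q) (v : DSV p q) :
    ¬ Dominating (doubleStar p q) {v} := by
  intro hdom
  rcases v with i | j | k
  · -- leaf inl i : c1 is not dominated
    rcases hdom (cc1 p q) with h | ⟨u, hu, hadj⟩
    · simp [cc1] at h
    · rw [Set.mem_singleton_iff] at hu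
      subst hu
      rw [ds_adj] at hadj
      simp [Fin.ext_iff] at hadj
  · -- leaf inr (inl j) : c0 is not dominated
    rcases hdom (cc0 p q) with h | ⟨u, hu, hadj⟩
    · simp [cc0] at h
    · rw [Set.mem_singleton_iff] at hu
      subst hu
      rw [ds_adj] at hadj
      simp [Fin.ext_iff] at hadj
  · have : k = 0 ∨ k = 1 := by omega
    rcases this with rfl | rfl
    · -- c0 : the leaf inr (inl 0) is not dominated
      rcases hdom (Sum.inr (Sum.inl ⟨0, hq⟩)) with h | ⟨u, hu, hadj⟩
      · simp at h
      · rw [Set.mem_singleton_iff] at hu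
        subst hu
        rw [ds_adj] at hadj
        simp [Fin.ext_iff] at hadj
    · -- c1 : the leaf inl 0 is not dominated
      rcases hdom (Sum.inl ⟨0, hp⟩) with h | ⟨u, hu, hadj⟩
      · simp at h
      · rw [Set.mem_singleton_iff] at hu
        subst hu
        rw [ds_adj] at hadj
        simp [Fin.ext_iff] at hadj

lemma not_dom_sL (hq : 1 ≤ q) : ¬ Dominating (doubleStar p q) (sL p q) := by
  intro hdom
  rcases hdom (Sum.inr (Sum.inl ⟨0, hq⟩)) with h | ⟨u, hu, hadj⟩
  · obtain ⟨i, hi⟩ := h; simp at hi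
  · obtain ⟨i, rfl⟩ := hu
    rw [ds_adj] at hadj
    simp [Fin.ext_iff] at hadj

lemma not_dom_sR (hp : 1 ≤ p) : ¬ Dominating (doubleStar p q) (sR p q) := by
  intro hdom
  rcases hdom (Sum.inl ⟨0, hp⟩) with h | ⟨u, hu, hadj⟩
  · obtain ⟨j, hj⟩ := h; simp at hj
  · obtain ⟨j, rfl⟩ := hu
    rw [ds_adj] at hadj
    simp [Fin.ext_iff] at hadj

lemma indep_sL : IndepSet (doubleStar p q) (sL p q) := by
  rintro u ⟨i, rfl⟩ v ⟨i', rfl⟩ hadj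
  rw [ds_adj] at hadj
  simp at hadj

lemma indep_sR : IndepSet (doubleStar p q) (sR p q) := by
  rintro u ⟨j, rfl⟩ v ⟨j', rfl⟩ hadj
  rw [ds_adj] at hadj
  simp at hadj

lemma indep_single (v : DSV p q) : IndepSet (doubleStar p q) {v} := by
  intro u hu w hw hadj
  rw [Set.mem_singleton_iff] at hu hw
  subst hu; subst hw
  exact (doubleStar p q).loopless.irrefl _ hadj

lemma coe_FL : ((FL p q : Finset (DSV p q)) : Set (DSV p q)) = sL p q := by
  ext v; simp [FL, sL, eq_comm]

lemma coe_FR : ((FR p q : Finset (DSV p q)) : Set (DSV p q)) = sR p q := by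
  ext v; simp [FR, sR, eq_comm]

lemma card4 {α : Type*} [DecidableEq α] (a b c d : α) :
    ({a, b, c, d} : Finset α).card ≤ 4 := by
  apply (Finset.card_insert_le _ _).trans
  apply Nat.succ_le_succ
  apply (Finset.card_insert_le _ _).trans
  apply Nat.succ_le_succ
  apply (Finset.card_insert_le _ _).trans
  simp

lemma ic_upper (hp : 1 ≤ p) (hq : 1 ≤ q) {π : Finset (Finset (DSV p q))}
    (hπ : IsICPartition (doubleStar p q) π) : π.card ≤ 4 := by
  classical
  obtain ⟨⟨hne, huniq⟩, hcl⟩ := hπ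
  have uniq : ∀ {X Y : Finset (DSV p q)} {v : DSV p q},
      X ∈ π → Y ∈ π → v ∈ X → v ∈ Y → X = Y := by
    intro X Y v hX hY hvX hvY
    exact ((huniq v).unique ⟨hX, hvX⟩ ⟨hY, hvY⟩)
  obtain ⟨A0, ⟨hA0π, hc0A0⟩, hA0u⟩ := huniq (cc0 p q)
  obtain ⟨A1, ⟨hA1π, hc1A1⟩, hA1u⟩ := huniq (cc1 p q)
  have partner : ∀ A ∈ π, ∃ B ∈ π, B ≠ A ∧
      ICCoalition (doubleStar p q) (A : Set (DSV p q)) (B : Set (DSV p q)) := by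
    intro A hA
    rcases hcl A hA with ⟨v, hAv, hdomv⟩ | ⟨_, B, hB, hBA, hco⟩
    · rw [hAv] at hdomv
      exact absurd hdomv (not_dom_singleton hp hq v)
    · exact ⟨B, hB, hBA, hco⟩
  by_cases hS2 : ∃ C ∈ π, ∃ D ∈ π,
      ((C : Set (DSV p q)) ∪ (D : Set (DSV p q))) = sL p q ∪ sR p q
  · obtain ⟨C, hCπ, D, hDπ, hCD⟩ := hS2
    have hsub : π ⊆ {A0, A1, C, D} := by
      intro E hE
      obtain ⟨v, hvE⟩ := hne E hE
      simp only [Finset.mem_insert, Finset.mem_singleton]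
      rcases v with i | j | k
      · have hmem : (Sum.inl i : DSV p q) ∈ ((C : Set (DSV p q)) ∪ (D : Set (DSV p q))) := by
          rw [hCD]; exact Or.inl ⟨i, rfl⟩
        rcases hmem with h | h
        · exact Or.inr (Or.inr (Or.inl (uniq hE hCπ hvE h)))
        · exact Or.inr (Or.inr (Or.inr (uniq hE hDπ hvE h)))
      · have hmem : (Sum.inr (Sum.inl j) : DSV p q) ∈
            ((C : Set (DSV p q)) ∪ (D : Set (DSV p q))) := by
          rw [hCD]; exact Or.inr ⟨j, rfl⟩
        rcases hmem with h | h
        · exact Or.inr (Or.inr (Or.inl (uniq hE hCπ hvE h)))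
        · exact Or.inr (Or.inr (Or.inr (uniq hE hDπ hvE h)))
      · have : k = 0 ∨ k = 1 := by omega
        rcases this with rfl | rfl
        · exact Or.inl (hA0u E ⟨hE, hvE⟩)
        · exact Or.inr (Or.inl (hA1u E ⟨hE, hvE⟩))
    exact (Finset.card_le_card hsub).trans (card4 _ _ _ _)
  · -- no class pairs to L ∪ R
    set X0 : Finset (DSV p q) := insert (cc0 p q) (FR p q) \ A0 with hX0
    set X1 : Finset (DSV p q) := insert (cc1 p q) (FL p q) \ A1 with hX1
    have hsub : π ⊆ {A0, A1, X0, X1} := by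
      intro E hE
      simp only [Finset.mem_insert, Finset.mem_singleton]
      by_cases hEA0 : E = A0
      · exact Or.inl hEA0
      by_cases hEA1 : E = A1
      · exact Or.inr (Or.inl hEA1)
      obtain ⟨F, hFπ, hFE, hco⟩ := partner E hE
      obtain ⟨hdisj, _, _, _, _, hids⟩ := hco
      rcases ids_cases hids with h | h | h
      · -- union is {c0} ∪ R, so F = A0 and E is determined
        have hc0 : (cc0 p q) ∈ ((E : Set (DSV p q)) ∪ (F : Set (DSV p q))) := by
          rw [h]; exact Set.mem_insert _ _
        rcases hc0 with h0 | h0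
        · exact absurd (hA0u E ⟨hE, h0⟩) hEA0
        have hFA0 : F = A0 := hA0u F ⟨hFπ, h0⟩
        subst hFA0
        refine Or.inr (Or.inr (Or.inl (Finset.coe_injective ?_)))
        rw [hX0]
        rw [Finset.coe_sdiff, Finset.coe_insert, coe_FR]
        ext v
        constructor
        · intro hv
          refine ⟨h ▸ Or.inl hv, fun hvA0 => ?_⟩
          exact Set.disjoint_left.mp hdisj hv hvA0
        · rintro ⟨hvS, hvA0⟩
          rw [← h] at hvS
          rcases hvS with hv | hv
          · exact hv
          · exact absurd hv hvA0
      · -- union is {c1} ∪ L, so F = A1 and E is determined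
        have hc1 : (cc1 p q) ∈ ((E : Set (DSV p q)) ∪ (F : Set (DSV p q))) := by
          rw [h]; exact Set.mem_insert _ _
        rcases hc1 with h0 | h0
        · exact absurd (hA1u E ⟨hE, h0⟩) hEA1
        have hFA1 : F = A1 := hA1u F ⟨hFπ, h0⟩
        subst hFA1
        refine Or.inr (Or.inr (Or.inr (Finset.coe_injective ?_)))
        rw [hX1]
        rw [Finset.coe_sdiff, Finset.coe_insert, coe_FL]
        ext v
        constructor
        · intro hv
          refine ⟨h ▸ Or.inl hv, fun hvA1 => ?_⟩
          exact Set.disjoint_left.mp hdisj hv hvA1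
        · rintro ⟨hvS, hvA1⟩
          rw [← h] at hvS
          rcases hvS with hv | hv
          · exact hv
          · exact absurd hv hvA1
      · exact absurd ⟨E, hE, F, hFπ, h⟩ hS2
    exact (Finset.card_le_card hsub).trans (card4 _ _ _ _)

lemma ne_c0_c1 : ({cc0 p q} : Finset (DSV p q)) ≠ {cc1 p q} := by
  simp [Fin.ext_iff]

lemma ne_c0_FL : ({cc0 p q} : Finset (DSV p q)) ≠ FL p q := by
  intro h
  have : cc0 p q ∈ FL p q := h ▸ Finset.mem_singleton_self _
  simp at this

lemma ne_c0_FR : ({cc0 p q} : Finset (DSV p q)) ≠ FR p q := by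
  intro h
  have : cc0 p q ∈ FR p q := h ▸ Finset.mem_singleton_self _
  simp [Fin.ext_iff] at this

lemma ne_c1_FL : ({cc1 p q} : Finset (DSV p q)) ≠ FL p q := by
  intro h
  have : cc1 p q ∈ FL p q := h ▸ Finset.mem_singleton_self _
  simp at this

lemma ne_c1_FR : ({cc1 p q} : Finset (DSV p q)) ≠ FR p q := by
  intro h
  have : cc1 p q ∈ FR p q := h ▸ Finset.mem_singleton_self _
  simp [Fin.ext_iff] at this

lemma ne_FL_FR (hp : 1 ≤ p) : FL p q ≠ FR p q := by
  intro h
  have : (Sum.inl ⟨0, hp⟩ : DSV p q) ∈ FR p q := h ▸ (by simp)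
  simp at this

lemma not_indepDom_c0s (hq : 1 ≤ q) :
    ¬ IndepDom (doubleStar p q) ({cc0 p q} : Set (DSV p q)) := by
  intro h
  rcases h.2 (Sum.inr (Sum.inl ⟨0, hq⟩)) with hm | ⟨u, hu, hadj⟩
  · simp [Fin.ext_iff] at hm
  · rw [Set.mem_singleton_iff] at hu
    subst hu
    rw [ds_adj] at hadj
    simp [Fin.ext_iff] at hadj

lemma not_indepDom_c1s (hp : 1 ≤ p) :
    ¬ IndepDom (doubleStar p q) ({cc1 p q} : Set (DSV p q)) := by
  intro h
  rcases h.2 (Sum.inl ⟨0, hp⟩) with hm | ⟨u, hu, hadj⟩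
  · simp at hm
  · rw [Set.mem_singleton_iff] at hu
    subst hu
    rw [ds_adj] at hadj
    simp [Fin.ext_iff] at hadj

lemma coalition_c0_FR (hp : 1 ≤ p) (hq : 1 ≤ q) :
    ICCoalition (doubleStar p q) (({cc0 p q} : Finset (DSV p q)) : Set (DSV p q))
      ((FR p q : Finset (DSV p q)) : Set (DSV p q)) := by
  rw [Finset.coe_singleton, coe_FR]
  refine ⟨?_, indep_single _, indep_sR, not_indepDom_c0s hq,
    fun h => not_dom_sR hp h.2, ?_⟩
  · refine Set.disjoint_left.mpr ?_
    rintro a ha ⟨j, rfl⟩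
    rw [Set.mem_singleton_iff] at ha
    simp at ha
  · rw [Set.singleton_union]
    exact indepDom_S0

lemma coalition_c1_FL (hp : 1 ≤ p) (hq : 1 ≤ q) :
    ICCoalition (doubleStar p q) (({cc1 p q} : Finset (DSV p q)) : Set (DSV p q))
      ((FL p q : Finset (DSV p q)) : Set (DSV p q)) := by
  rw [Finset.coe_singleton, coe_FL]
  refine ⟨?_, indep_single _, indep_sL, not_indepDom_c1s hp,
    fun h => not_dom_sL hq h.2, ?_⟩
  · refine Set.disjoint_left.mpr ?_
    rintro a ha ⟨i, rfl⟩
    rw [Set.mem_singleton_iff] at ha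
    simp at ha
  · rw [Set.singleton_union]
    exact indepDom_S1

lemma coalition_symm {V : Type*} {G : SimpleGraph V} {A B : Set V}
    (h : ICCoalition G A B) : ICCoalition G B A :=
  ⟨h.1.symm, h.2.2.1, h.2.1, h.2.2.2.2.1, h.2.2.2.1, Set.union_comm A B ▸ h.2.2.2.2.2⟩

lemma ic_lower (hp : 1 ≤ p) (hq : 1 ≤ q) :
    IsICPartition (doubleStar p q)
      ({{cc0 p q}, {cc1 p q}, FL p q, FR p q} : Finset (Finset (DSV p q))) ∧
      ({{cc0 p q}, {cc1 p q}, FL p q, FR p q} : Finset (Finset (DSV p q))).card = 4 := by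
  classical
  constructor
  · constructor
    · constructor
      · intro A hA
        simp only [Finset.mem_insert, Finset.mem_singleton] at hA
        rcases hA with rfl | rfl | rfl | rfl
        · exact ⟨cc0 p q, Finset.mem_singleton_self _⟩
        · exact ⟨cc1 p q, Finset.mem_singleton_self _⟩
        · exact ⟨Sum.inl ⟨0, hp⟩, by simp⟩
        · exact ⟨Sum.inr (Sum.inl ⟨0, hq⟩), by simp⟩
      · intro v
        rcases v with i | j | k
        · refine ⟨FL p q, ⟨by simp, by simp⟩, ?_⟩
          rintro X ⟨hX, hvX⟩
          simp only [Finset.mem_insert, Finset.mem_singleton] at hX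
          rcases hX with rfl | rfl | rfl | rfl
          · simp at hvX
          · simp at hvX
          · rfl
          · simp at hvX
        · refine ⟨FR p q, ⟨by simp, by simp⟩, ?_⟩
          rintro X ⟨hX, hvX⟩
          simp only [Finset.mem_insert, Finset.mem_singleton] at hX
          rcases hX with rfl | rfl | rfl | rfl
          · simp at hvX
          · simp at hvX
          · simp at hvX
          · rfl
        · have hk : k = 0 ∨ k = 1 := by omega
          rcases hk with rfl | rfl
          · refine ⟨{cc0 p q}, ⟨by simp, Finset.mem_singleton_self _⟩, ?_⟩
            rintro X ⟨hX, hvX⟩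
            simp only [Finset.mem_insert, Finset.mem_singleton] at hX
            rcases hX with rfl | rfl | rfl | rfl
            · rfl
            · simp [Fin.ext_iff] at hvX
            · simp at hvX
            · simp [Fin.ext_iff] at hvX
          · refine ⟨{cc1 p q}, ⟨by simp, Finset.mem_singleton_self _⟩, ?_⟩
            rintro X ⟨hX, hvX⟩
            simp only [Finset.mem_insert, Finset.mem_singleton] at hX
            rcases hX with rfl | rfl | rfl | rfl
            · simp [Fin.ext_iff] at hvX
            · rfl
            · simp at hvX
            · simp [Fin.ext_iff] at hvX
    · intro A hA
      simp only [Finset.mem_insert, Finset.mem_singleton] at hA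
      rcases hA with rfl | rfl | rfl | rfl
      · refine Or.inr ⟨by rw [Finset.coe_singleton]; exact not_indepDom_c0s hq,
          FR p q, by simp, Ne.symm ne_c0_FR, coalition_c0_FR hp hq⟩
      · refine Or.inr ⟨by rw [Finset.coe_singleton]; exact not_indepDom_c1s hp,
          FL p q, by simp, Ne.symm ne_c1_FL, coalition_c1_FL hp hq⟩
      · refine Or.inr ⟨by rw [coe_FL]; exact fun h => not_dom_sL hq h.2,
          {cc1 p q}, by simp, ne_c1_FL, coalition_symm (coalition_c1_FL hp hq)⟩
      · refine Or.inr ⟨by rw [coe_FR]; exact fun h => not_dom_sR hp h.2,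
          {cc0 p q}, by simp, ne_c0_FR, coalition_symm (coalition_c0_FR hp hq)⟩
  · rw [Finset.card_insert_of_notMem (by
        simp only [Finset.mem_insert, Finset.mem_singleton]
        push_neg
        exact ⟨ne_c0_c1, ne_c0_FL, ne_c0_FR⟩),
      Finset.card_insert_of_notMem (by
        simp only [Finset.mem_insert, Finset.mem_singleton]
        push_neg
        exact ⟨ne_c1_FL, ne_c1_FR⟩),
      Finset.card_insert_of_notMem (by
        simp only [Finset.mem_singleton]
        exact ne_FL_FR hp),
      Finset.card_singleton]

end Aux

theorem stmt_7 (p q : ℕ) (hp : 1 ≤ p) (hq : 1 ≤ q) : IC (doubleStar p q) = 4 := by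
  obtain ⟨hpart, hcard⟩ := ic_lower hp hq
  have h4 : (4 : ℕ) ∈ {k | ∃ π : Finset (Finset (DSV p q)),
      IsICPartition (doubleStar p q) π ∧ π.card = k} :=
    ⟨_, hpart, hcard⟩
  have hub : ∀ k ∈ {k | ∃ π : Finset (Finset (DSV p q)),
      IsICPartition (doubleStar p q) π ∧ π.card = k}, k ≤ 4 := by
    rintro k ⟨π, hπ, rfl⟩
    exact ic_upper hp hq hπ
  rw [IC]
  exact le_antisymm (csSup_le ⟨4, h4⟩ hub) (le_csSup ⟨4, hub⟩ h4)

end ICNL
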